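/- Let β > 1, c > 0, u₀ ∈ (0,1], and let u : [0,∞) → [0,1] be the unique solution of u'(t) = u(t)(1-u(t))e^{β(u(t)-1)} with u(0) = u₀. Then the first time t at which 1 - u(t) ≤ e^{-cβ} satisfies inf{t ≥ 0 : 1 - u(t) ≤ e^{-cβ}} ≤ e^{β(1-u₀)}/u₀ + β²·c·e/(β-1). -/

import Mathlib

set_option maxHeartbeats 1000000

open Set intervalIntegral MeasureTheory

theorem stmt2 (β c u₀ : ℝ) (hβ : 1 < β) (hc : 0 < c) (hu₀ : u₀ ∈ Set.Ioc (0:ℝ) 1)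
    (u : ℝ → ℝ) (hrange : ∀ t, 0 ≤ t → u t ∈ Set.Icc (0:ℝ) 1)
    (hflow : ∀ t, 0 ≤ t → HasDerivAt u (u t * (1 - u t) * Real.exp (β * (u t - 1))) t)
    (h0 : u 0 = u₀) :
    sInf {t : ℝ | 0 ≤ t ∧ 1 - u t ≤ Real.exp (-c * β)} ≤
      Real.exp (β * (1 - u₀)) / u₀ + β ^ 2 * c * Real.exp 1 / (β - 1) := by
  obtain ⟨hu₀0, hu₀1⟩ := hu₀
  have hβ0 : (0:ℝ) < β := lt_trans one_pos hβ
  have hβ1 : (0:ℝ) < β - 1 := by linarith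
  set ε : ℝ := Real.exp (-c*β) with hεdef
  have hε0 : 0 < ε := Real.exp_pos _
  have hε1 : ε < 1 := by
    rw [hεdef]
    apply Real.exp_lt_one_iff.mpr
    nlinarith
  set M : ℝ := Real.exp (β * (1 - u₀)) / u₀ with hMdef
  have hM0 : 0 < M := div_pos (Real.exp_pos _) hu₀0
  set T : ℝ := M + β ^ 2 * c * Real.exp 1 / (β - 1) with hTdef
  have hT2 : 0 < β ^ 2 * c * Real.exp 1 / (β - 1) := by positivity
  have hT0 : (0:ℝ) ≤ T := by rw [hTdef]; linarith
  have hbdd : BddBelow {t : ℝ | 0 ≤ t ∧ 1 - u t ≤ ε} := ⟨0, fun x hx => hx.1⟩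
  by_cases hcase : 1 - u T ≤ ε
  · exact csInf_le hbdd ⟨hT0, hcase⟩
  push_neg at hcase
  exfalso
  have huT : u T < 1 - ε := by linarith
  -- u is monotone on [0, ∞)
  have hmono : MonotoneOn u (Ici 0) := by
    apply monotoneOn_of_deriv_nonneg (convex_Ici 0)
    · exact fun t ht => ((hflow t ht).continuousAt).continuousWithinAt
    · intro x hx
      rw [interior_Ici] at hx
      exact ((hflow x hx.le).differentiableAt).differentiableWithinAt
    · intro x hx
      rw [interior_Ici] at hx
      rw [(hflow x hx.le).deriv]
      obtain ⟨h1, h2⟩ := hrange x hx.le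
      exact mul_nonneg (mul_nonneg h1 (by linarith)) (Real.exp_pos _).le
  have hu_pos : ∀ t, 0 ≤ t → u₀ ≤ u t := by
    intro t ht
    have := hmono Set.self_mem_Ici (show t ∈ Ici 0 from ht) ht
    rwa [h0] at this
  have huTu₀ : u₀ ≤ u T := hu_pos T hT0
  have hu₀lt : u₀ < 1 - ε := lt_of_le_of_lt huTu₀ huT
  set f : ℝ → ℝ := fun x => Real.exp (β * (1 - x)) / (x * (1 - x)) with hfdef
  have hfcont : ContinuousOn f (Ioo 0 1) := by
    apply ContinuousOn.div
    · fun_prop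
    · fun_prop
    · intro x hx
      exact (mul_pos hx.1 (by linarith [hx.2])).ne'
  have hIccsub : ∀ a b : ℝ, u₀ ≤ a → b ≤ 1 - ε → Icc a b ⊆ Ioo 0 1 := by
    intro a b ha hb x hx
    exact ⟨lt_of_lt_of_le hu₀0 (ha.trans hx.1), lt_of_le_of_lt (hx.2.trans hb) (by linarith)⟩
  have hintg : ∀ a b : ℝ, a ≤ b → u₀ ≤ a → b ≤ 1 - ε →
      IntervalIntegrable f MeasureTheory.volume a b := by
    intro a b hab ha hb
    apply ContinuousOn.intervalIntegrable
    rw [Set.uIcc_of_le hab]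
    exact hfcont.mono (hIccsub a b ha hb)
  set G : ℝ → ℝ := fun v => ∫ x in u₀..v, f x with hGdef
  -- G (u t) = t on [0, T]
  have key : ∀ t ∈ Icc (0:ℝ) T, HasDerivAt (fun s => G (u s) - s) 0 t := by
    intro t ht
    have htnn : 0 ≤ t := ht.1
    have hv0 : 0 < u t := lt_of_lt_of_le hu₀0 (hu_pos t htnn)
    have hvle : u t ≤ u T :=
      hmono (show t ∈ Ici 0 from htnn) (show T ∈ Ici 0 from hT0) ht.2
    have hv1 : u t < 1 := by linarith
    have hd1 : HasDerivAt G (f (u t)) (u t) := by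
      apply intervalIntegral.integral_hasDerivAt_right
      · exact hintg u₀ (u t) (hu_pos t htnn) le_rfl (by linarith)
      · exact hfcont.stronglyMeasurableAtFilter isOpen_Ioo (u t) ⟨hv0, hv1⟩
      · exact hfcont.continuousAt (Ioo_mem_nhds hv0 hv1)
    have hd2 : HasDerivAt (fun s => G (u s))
        (f (u t) * (u t * (1 - u t) * Real.exp (β * (u t - 1)))) t :=
      hd1.comp t (hflow t htnn)
    have hone : f (u t) * (u t * (1 - u t) * Real.exp (β * (u t - 1))) = 1 := by
      have hne : u t * (1 - u t) ≠ 0 := (mul_pos hv0 (by linarith)).ne'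
      have hexp : Real.exp (β * (1 - u t)) * Real.exp (β * (u t - 1)) = 1 := by
        rw [← Real.exp_add, show β * (1 - u t) + β * (u t - 1) = 0 by ring, Real.exp_zero]
      simp only [hfdef]
      rw [div_mul_eq_mul_div, div_eq_one_iff_eq hne]
      linear_combination (u t * (1 - u t)) * hexp
    rw [hone] at hd2
    have h3 := hd2.sub (hasDerivAt_id' t)
    rw [sub_self] at h3
    exact h3
  have hGp : ∀ t ∈ Icc (0:ℝ) T, G (u t) = t := by
    have hc2 := constant_of_has_deriv_right_zero
      (f := fun s => G (u s) - s) (a := 0) (b := T)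
      (fun t ht => ((key t ht).continuousAt).continuousWithinAt)
      (fun t ht => (key t (Ico_subset_Icc_self ht)).hasDerivWithinAt)
    intro t ht
    have h1 := hc2 t ht
    have h2 : G (u 0) = 0 := by
      rw [h0, hGdef]; exact intervalIntegral.integral_same
    simp only [h2] at h1
    linarith
  have hTeq : T = G (u T) := (hGp T ⟨hT0, le_rfl⟩).symm
  -- G (u T) ≤ ∫_{u₀}^{1-ε} f
  have hsplit : G (u T) + ∫ x in (u T)..(1 - ε), f x = ∫ x in u₀..(1 - ε), f x :=
    intervalIntegral.integral_add_adjacent_intervals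
      (hintg u₀ (u T) huTu₀ le_rfl huT.le) (hintg (u T) (1 - ε) huT.le huTu₀ le_rfl)
  have htail : 0 ≤ ∫ x in (u T)..(1 - ε), f x := by
    apply intervalIntegral.integral_nonneg huT.le
    intro x hx
    have hx0 : 0 < x := lt_of_lt_of_le (lt_of_lt_of_le hu₀0 huTu₀) hx.1
    have hx1 : x < 1 := by linarith [hx.2]
    apply div_nonneg (Real.exp_pos _).le
    nlinarith
  have hGle : G (u T) ≤ ∫ x in u₀..(1 - ε), f x := by linarith
  -- comparison function g and antiderivative Φ
  set g : ℝ → ℝ := fun x => M + β * Real.exp (β * (1 - x)) + Real.exp 1 / (1 - x) with hgdef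
  have hfg : ∀ x ∈ Icc u₀ (1 - ε), f x ≤ g x := by
    intro x hx
    have hx0 : 0 < x := lt_of_lt_of_le hu₀0 hx.1
    have hx1 : x < 1 := by linarith [hx.2]
    have h1x : 0 < 1 - x := by linarith
    have hsplit2 : f x = Real.exp (β * (1 - x)) / x + Real.exp (β * (1 - x)) / (1 - x) := by
      rw [hfdef]
      field_simp
      ring
    rw [hsplit2, hgdef]
    have hterm1 : Real.exp (β * (1 - x)) / x ≤ M := by
      rw [hMdef]
      apply div_le_div₀ (Real.exp_pos _).le _ hu₀0 hx.1
      exact Real.exp_le_exp.mpr (by nlinarith [hx.1])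
    have hterm2 : Real.exp (β * (1 - x)) / (1 - x) ≤
        β * Real.exp (β * (1 - x)) + Real.exp 1 / (1 - x) := by
      rcases le_or_gt (β * (1 - x)) 1 with hc2 | hc2
      · have h1 : Real.exp (β * (1 - x)) ≤ Real.exp 1 := Real.exp_le_exp.mpr hc2
        have h2 : Real.exp (β * (1 - x)) / (1 - x) ≤ Real.exp 1 / (1 - x) := by
          gcongr
        have h3 : 0 ≤ β * Real.exp (β * (1 - x)) := by positivity
        linarith
      · have h1 : Real.exp (β * (1 - x)) / (1 - x) ≤ β * Real.exp (β * (1 - x)) := by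
          rw [div_le_iff₀ h1x]
          nlinarith [Real.exp_pos (β * (1 - x))]
        have h2 : 0 ≤ Real.exp 1 / (1 - x) := by positivity
        linarith
    linarith
  set Φ : ℝ → ℝ := fun x => M * x - Real.exp (β * (1 - x)) - Real.exp 1 * Real.log (1 - x)
    with hΦdef
  have hΦd : ∀ x ∈ uIcc u₀ (1 - ε), HasDerivAt Φ (g x) x := by
    intro x hx
    rw [Set.uIcc_of_le hu₀lt.le] at hx
    have h1x : 0 < 1 - x := by linarith [hx.2]
    have d1 : HasDerivAt (fun x : ℝ => β * (1 - x)) (-β) x := by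
      simpa using ((hasDerivAt_id x).const_sub 1).const_mul β
    have d2 : HasDerivAt (fun x => Real.exp (β * (1 - x)))
        (Real.exp (β * (1 - x)) * (-β)) x := d1.exp
    have d3 : HasDerivAt (fun x : ℝ => 1 - x) (-1) x := by
      simpa using (hasDerivAt_id x).const_sub 1
    have d4 : HasDerivAt (fun x => Real.log (1 - x)) (-1 / (1 - x)) x := d3.log h1x.ne'
    have d5 := (((hasDerivAt_id x).const_mul M).sub d2).sub (d4.const_mul (Real.exp 1))
    have harg : M * 1 - Real.exp (β * (1 - x)) * (-β) - Real.exp 1 * (-1 / (1 - x)) = g x := by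
      rw [hgdef]
      ring
    rw [harg] at d5
    exact d5
  have hgint : IntervalIntegrable g MeasureTheory.volume u₀ (1 - ε) := by
    apply ContinuousOn.intervalIntegrable
    rw [Set.uIcc_of_le hu₀lt.le]
    apply ContinuousOn.add
    · apply ContinuousOn.add continuousOn_const
      fun_prop
    · apply ContinuousOn.div continuousOn_const (by fun_prop)
      intro x hx
      have : 0 < 1 - x := by
        have := hx.2
        linarith
      exact this.ne'
  have hintΦ : ∫ x in u₀..(1 - ε), g x = Φ (1 - ε) - Φ u₀ :=
    intervalIntegral.integral_eq_sub_of_hasDerivAt hΦd hgint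
  have hintfg : (∫ x in u₀..(1 - ε), f x) ≤ ∫ x in u₀..(1 - ε), g x := by
    apply intervalIntegral.integral_mono_on hu₀lt.le
      (hintg u₀ (1 - ε) hu₀lt.le le_rfl le_rfl) hgint hfg
  -- final arithmetic
  have hΦval : Φ (1 - ε) - Φ u₀ < T := by
    rw [hΦdef, hTdef]
    simp only
    have e0 : (1 : ℝ) - (1 - ε) = ε := by ring
    have e1 : Real.log ε = -c * β := by rw [hεdef, Real.log_exp]
    have e2 : Real.exp (β * (1 - u₀)) = M * u₀ := by
      rw [hMdef]; field_simp
    have e3 : Real.log (1 - u₀) ≤ 0 :=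
      Real.log_nonpos (by linarith) (by linarith)
    rw [e0, e1, e2]
    have h4 : 0 < Real.exp (β * ε) := Real.exp_pos _
    have h5 : Real.exp 1 * (c * β) < β ^ 2 * c * Real.exp 1 / (β - 1) := by
      rw [lt_div_iff₀ hβ1]
      have hecb : 0 < Real.exp 1 * c * β := by positivity
      nlinarith [hecb]
    nlinarith [mul_pos hM0 hε0, mul_nonneg (Real.exp_pos 1).le (neg_nonneg.mpr e3)]
  linarith [hTeq, hGle, hintfg, hintΦ.le, hΦval, hsplit, htail]
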